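/- Let X be a Hilbert space, U a Banach space, A:ℝ≥0→L(X) continuous and uniformly bounded in the uniform operator topology, and B∈C(ℝ≥0,L(U,X)) with b̃ := sup_{t≥0}‖B(t)‖ < ∞. Suppose P:ℝ≥0→L(X) is a continuously differentiable, bounded, coercive positive operator-valued function satisfying A(t)*P(t)+P(t)A(t)+Ṗ(t) = −I for all t≥0, with coercivity constant μ₁>0 and p := sup_{t≥0}‖P(t)‖. Then V(t,x) := ⟨P(t)x,x⟩ satisfies μ₁‖x‖²_X ≤ V(t,x) ≤ p‖x‖²_X for all t≥0, x∈X, and along every piecewise classical solution x(·) of ẋ(t)=A(t)x(t)+B(t)u(t) with input u∈PC(ℝ≥0,U), at every point of differentiability and for every η>0, d/dt V(t,x(t)) ≤ −‖x(t)‖²_X + p b̃ η ‖x(t)‖²_X + (p b̃/η)‖u‖²_𝒰; consequently (choosing η < (p b̃)⁻¹) V is an ISS Lyapunov function and the system ẋ=A(t)x+B(t)u is ISS. -/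

import Mathlib

open Filter Topology Set MeasureTheory
open scoped RealInnerProductSpace

noncomputable section

/-- Class `𝒦`: continuous, strictly increasing on `[0,∞)`, vanishing at `0`. -/
structure ClassK (g : ℝ → ℝ) : Prop where
  cont : ContinuousOn g (Set.Ici 0)
  mono : StrictMonoOn g (Set.Ici 0)
  zero : g 0 = 0
  nonneg : ∀ r : ℝ, 0 ≤ r → 0 ≤ g r

/-- Class `𝒦∞`: unbounded class-`𝒦` functions. -/
structure ClassKInf (g : ℝ → ℝ) : Prop where
  toClassK : ClassK g
  unbounded : ∀ M : ℝ, ∃ r : ℝ, 0 ≤ r ∧ M < g r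

/-- Class `𝒫`: positive definite functions. -/
structure ClassPD (g : ℝ → ℝ) : Prop where
  cont : ContinuousOn g (Set.Ici 0)
  zero : g 0 = 0
  pos : ∀ r : ℝ, 0 < r → 0 < g r

/-- Class `𝒦ℒ`. -/
structure ClassKL (b : ℝ → ℝ → ℝ) : Prop where
  classK : ∀ t : ℝ, 0 ≤ t → ClassK (fun r => b r t)
  contL : ∀ r : ℝ, 0 < r → ContinuousOn (fun t => b r t) (Set.Ici 0)
  antiL : ∀ r : ℝ, 0 < r → StrictAntiOn (fun t => b r t) (Set.Ici 0)
  tendstoL : ∀ r : ℝ, 0 < r → Tendsto (fun t => b r t) atTop (nhds 0)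

/-- Globally bounded, piecewise right-continuous input: bounded, right-continuous
everywhere, and with only finitely many discontinuities in every compact interval. -/
structure IsPC {U : Type*} [NormedAddCommGroup U] (u : ℝ → U) : Prop where
  bounded : ∃ C : ℝ, ∀ s : ℝ, ‖u s‖ ≤ C
  rightCont : ∀ t : ℝ, ContinuousWithinAt u (Set.Ici t) t
  locFinite : ∀ a b : ℝ, {s ∈ Set.Icc a b | ¬ ContinuousAt u s}.Finite

/-- The sup-norm `sup_{s ≥ 0} ‖u s‖` of an input. -/
def pcNorm {U : Type*} [NormedAddCommGroup U] (u : ℝ → U) : ℝ :=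
  sSup ((fun s => ‖u s‖) '' Set.Ici 0)

/-- Piecewise classical solution of `ẋ(t) = f(t, x(t))` on `[t0,∞)`: continuous,
and differentiable satisfying the ODE away from a locally finite set. -/
def IsPCSol {X : Type*} [NormedAddCommGroup X] [NormedSpace ℝ X]
    (f : ℝ → X → X) (t0 : ℝ) (x : ℝ → X) : Prop :=
  ContinuousOn x (Set.Ici t0) ∧
  ∃ D : Set ℝ, (∀ a b : ℝ, (D ∩ Set.Icc a b).Finite) ∧
    ∀ t ∈ Set.Ioi t0 \ D, HasDerivAt x (f t (x t)) t

/-- Grönwall inequality allowing a locally-finite exceptional set. -/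
theorem gronwall_finite_exceptions {f : ℝ → ℝ} {K ε δ a b : ℝ} {D : Set ℝ}
    (hD : ∀ c d : ℝ, (D ∩ Set.Icc c d).Finite)
    (hf : ContinuousOn f (Set.Icc a b))
    (hd : ∀ s ∈ Set.Ioo a b, s ∉ D → ∃ d, HasDerivAt f d s ∧ d ≤ K * f s + ε)
    (ha : f a ≤ δ) :
    ∀ x ∈ Set.Icc a b, f x ≤ gronwallBound δ K ε (x - a) := by
  classical
  set F' : ℝ → ℝ := fun s => if h : ∃ d, HasDerivAt f d s then h.choose else 0 with hF'
  have hF'spec : ∀ s ∈ Set.Ioo a b, s ∉ D → HasDerivAt f (F' s) s ∧ F' s ≤ K * f s + ε := by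
    intro s hs hsD
    obtain ⟨d, hd1, hd2⟩ := hd s hs hsD
    have hex : ∃ d, HasDerivAt f d s := ⟨d, hd1⟩
    have h1 : HasDerivAt f (F' s) s := by
      simpa [hF', dif_pos hex] using hex.choose_spec
    exact ⟨h1, by rwa [h1.unique hd1]⟩
  apply le_gronwallBound_of_liminf_deriv_right_le (f' := fun s => K * f s + ε) hf ?_ ha
    (fun x _ => le_refl _)
  intro x hx r hr
  -- a punctured right neighbourhood of x avoiding D
  set E : Set ℝ := (D ∩ Set.Icc x (x + 1)) \ {x} with hE
  have hEfin : E.Finite := (hD x (x + 1)).diff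
  have hxE : x ∉ E := fun h => h.2 rfl
  obtain ⟨δ₁, hδ₁pos, hball₁⟩ : ∃ δ₁ > 0, Metric.ball x δ₁ ⊆ Eᶜ :=
    Metric.isOpen_iff.1 hEfin.isClosed.isOpen_compl x hxE
  -- continuity: K * f s + ε < r near x within Icc a b
  have hcont : ContinuousWithinAt (fun s => K * f s + ε) (Set.Icc a b) x :=
    ((hf x (Ico_subset_Icc_self hx)).const_smul K).add continuousWithinAt_const
  have hev : ∀ᶠ s in 𝓝[Set.Icc a b] x, K * f s + ε < r := hcont.eventually_lt_const hr
  obtain ⟨δ₂, hδ₂pos, hball₂'⟩ := Metric.mem_nhdsWithin_iff.1 hev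
  have hball₂ : ∀ s : ℝ, s ∈ Set.Icc a b → dist s x < δ₂ → K * f s + ε < r := fun s hs hd =>
    hball₂' ⟨Metric.mem_ball.2 hd, hs⟩
  set c : ℝ := min (min δ₁ δ₂) (min 1 (b - x)) with hc
  have hcpos : 0 < c := by
    have := hx.2; simp only [hc, lt_min_iff]; exact ⟨⟨hδ₁pos, hδ₂pos⟩, one_pos, by linarith⟩
  have key : ∀ᶠ z in 𝓝[>] x, (z - x)⁻¹ * (f z - f x) < r := by
    filter_upwards [Ioo_mem_nhdsGT (show x < x + c by linarith)] with z hz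
    have hzx : x < z := hz.1
    have hzb : z ≤ b := by
      have : z < x + c := hz.2
      have : c ≤ b - x := (min_le_right _ _).trans (min_le_right _ _)
      linarith [hz.2]
    have hnotD : ∀ ξ ∈ Set.Ioo x z, ξ ∉ D := by
      intro ξ hξ hξD
      have h1 : ξ < x + c := lt_trans hξ.2 hz.2
      have hc1 : c ≤ 1 := (min_le_right _ _).trans (min_le_left _ _)
      have hcδ₁ : c ≤ δ₁ := (min_le_left _ _).trans (min_le_left _ _)
      have : ξ ∈ E := ⟨⟨hξD, ⟨le_of_lt hξ.1, by linarith⟩⟩, fun h => by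
        simp only [Set.mem_singleton_iff] at h; exact absurd h (ne_of_gt hξ.1)⟩
      exact hball₁ (by
        simp only [Metric.mem_ball, Real.dist_eq, abs_lt]
        constructor <;> [linarith [hξ.1]; linarith]) this
    have hsub : Set.Icc x z ⊆ Set.Icc a b := Set.Icc_subset_Icc hx.1 hzb
    obtain ⟨ξ, hξmem, hξ⟩ := exists_hasDerivAt_eq_slope f F' hzx (hf.mono hsub)
      (fun ξ hξ => (hF'spec ξ ⟨lt_of_le_of_lt hx.1 hξ.1, lt_of_lt_of_le hξ.2 hzb⟩
        (hnotD ξ hξ)).1)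
    have hξab : ξ ∈ Set.Icc a b := ⟨le_of_lt (lt_of_le_of_lt hx.1 hξmem.1),
      le_trans (le_of_lt hξmem.2) hzb⟩
    have hξd : dist ξ x < δ₂ := by
      have hcδ₂ : c ≤ δ₂ := (min_le_left _ _).trans (min_le_right _ _)
      simp only [Real.dist_eq, abs_lt]
      constructor <;> [linarith [hξmem.1]; linarith [hξmem.2, hz.2]]
    have hbd : F' ξ ≤ K * f ξ + ε :=
      (hF'spec ξ ⟨lt_of_le_of_lt hx.1 hξmem.1, lt_of_lt_of_le hξmem.2 hzb⟩
        (hnotD ξ hξmem)).2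
    calc (z - x)⁻¹ * (f z - f x) = (f z - f x) / (z - x) := (div_eq_inv_mul _ _).symm
      _ = F' ξ := hξ.symm
      _ ≤ K * f ξ + ε := hbd
      _ < r := hball₂ ξ hξab hξd
  exact key.frequently

/-- Linear functions with positive slope are of class `𝒦`. -/
theorem classK_linear {k : ℝ} (hk : 0 < k) : ClassK (fun r => k * r) where
  cont := (continuous_const.mul continuous_id).continuousOn
  mono := fun r _ s _ hrs => by simpa using (mul_lt_mul_iff_right₀ hk).2 hrs
  zero := mul_zero k
  nonneg := fun r hr => mul_nonneg hk.le hr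

theorem sqrt_add_le (a b : ℝ) (ha : 0 ≤ a) (hb : 0 ≤ b) :
    Real.sqrt (a + b) ≤ Real.sqrt a + Real.sqrt b := by
  rw [show a + b = Real.sqrt a ^ 2 + Real.sqrt b ^ 2 by
    rw [Real.sq_sqrt ha, Real.sq_sqrt hb]]
  have h1 := Real.sqrt_nonneg a
  have h2 := Real.sqrt_nonneg b
  calc Real.sqrt (Real.sqrt a ^ 2 + Real.sqrt b ^ 2)
      ≤ Real.sqrt ((Real.sqrt a + Real.sqrt b) ^ 2) := by
        apply Real.sqrt_le_sqrt; nlinarith [mul_nonneg h1 h2]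
    _ = Real.sqrt a + Real.sqrt b := Real.sqrt_sq (by linarith)

set_option maxHeartbeats 1000000 in
/-- `V(t,x) = ⟨P(t)x,x⟩` built from the Lyapunov equality is a coercive ISS Lyapunov
function for `ẋ = A(t)x + B(t)u`, and the system is ISS. -/
theorem stmt7 {X U : Type*} [NormedAddCommGroup X] [InnerProductSpace ℝ X] [CompleteSpace X]
    [NormedAddCommGroup U] [NormedSpace ℝ U]
    (A : ℝ → X →L[ℝ] X) (hAcont : Continuous A) (hAbdd : ∃ C : ℝ, ∀ t : ℝ, ‖A t‖ ≤ C)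
    (B : ℝ → U →L[ℝ] X) (hBcont : Continuous B)
    (btilde : ℝ) (hb : IsLUB ((fun t => ‖B t‖) '' Set.Ici 0) btilde)
    (P P' : ℝ → X →L[ℝ] X)
    (hP : ∀ t : ℝ, HasDerivAt P (P' t) t) (hP'cont : Continuous P')
    (hPsa : ∀ t : ℝ, ContinuousLinearMap.adjoint (P t) = P t)
    (hPpos : ∀ t : ℝ, ∀ x : X, x ≠ 0 → 0 < ⟪P t x, x⟫)
    (μ₁ : ℝ) (hμ₁ : 0 < μ₁)
    (hcoer : ∀ t : ℝ, 0 ≤ t → ∀ x : X, μ₁ * ‖x‖ ^ 2 ≤ ⟪P t x, x⟫)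
    (p : ℝ) (hp : IsLUB ((fun t => ‖P t‖) '' Set.Ici 0) p)
    (hLyap : ∀ t : ℝ, 0 ≤ t →
      (ContinuousLinearMap.adjoint (A t)).comp (P t) + (P t).comp (A t) + P' t =
        -(ContinuousLinearMap.id ℝ X)) :
    (∀ t : ℝ, 0 ≤ t → ∀ x : X,
      μ₁ * ‖x‖ ^ 2 ≤ ⟪P t x, x⟫ ∧ ⟪P t x, x⟫ ≤ p * ‖x‖ ^ 2) ∧
    (∀ u : ℝ → U, IsPC u → ∀ t0 : ℝ, 0 ≤ t0 → ∀ x : ℝ → X,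
      IsPCSol (fun t ξ => A t ξ + B t (u t)) t0 x →
      ∀ t ∈ Set.Ioi t0, ∀ η : ℝ, 0 < η →
        HasDerivAt x (A t (x t) + B t (u t)) t →
        ∀ v' : ℝ, HasDerivAt (fun s => ⟪P s (x s), x s⟫) v' t →
          v' ≤ -‖x t‖ ^ 2 + p * btilde * η * ‖x t‖ ^ 2 + p * btilde / η * pcNorm u ^ 2) ∧
    (∃ β : ℝ → ℝ → ℝ, ∃ γ : ℝ → ℝ, ClassKL β ∧ ClassK γ ∧
      ∀ u : ℝ → U, IsPC u → ∀ t0 : ℝ, 0 ≤ t0 → ∀ x : ℝ → X,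
        IsPCSol (fun t ξ => A t ξ + B t (u t)) t0 x →
        ∀ t : ℝ, t0 ≤ t → ‖x t‖ ≤ β ‖x t0‖ (t - t0) + γ (pcNorm u)) := by
  -- basic facts
  have hPle : ∀ t : ℝ, 0 ≤ t → ‖P t‖ ≤ p := fun t ht => hp.1 ⟨t, ht, rfl⟩
  have hBle : ∀ t : ℝ, 0 ≤ t → ‖B t‖ ≤ btilde := fun t ht => hb.1 ⟨t, ht, rfl⟩
  have hp0 : 0 ≤ p := le_trans (norm_nonneg (P 0)) (hPle 0 le_rfl)
  have hb0 : 0 ≤ btilde := le_trans (norm_nonneg (B 0)) (hBle 0 le_rfl)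
  have hpb0 : 0 ≤ p * btilde := mul_nonneg hp0 hb0
  -- upper bound of V
  have hupper : ∀ t : ℝ, 0 ≤ t → ∀ y : X, ⟪P t y, y⟫ ≤ p * ‖y‖ ^ 2 := by
    intro t ht y
    calc ⟪P t y, y⟫ ≤ ‖P t y‖ * ‖y‖ := real_inner_le_norm _ _
      _ ≤ (‖P t‖ * ‖y‖) * ‖y‖ :=
        mul_le_mul_of_nonneg_right ((P t).le_opNorm y) (norm_nonneg y)
      _ ≤ (p * ‖y‖) * ‖y‖ :=
        mul_le_mul_of_nonneg_right
          (mul_le_mul_of_nonneg_right (hPle t ht) (norm_nonneg y)) (norm_nonneg y)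
      _ = p * ‖y‖ ^ 2 := by ring
  -- symmetry of P
  have hsym : ∀ t : ℝ, ∀ z y : X, ⟪P t z, y⟫ = ⟪P t y, z⟫ := by
    intro t z y
    conv_lhs => rw [← hPsa t]
    rw [ContinuousLinearMap.adjoint_inner_left, real_inner_comm]
  -- scalar Lyapunov identity
  have hlyap' : ∀ t : ℝ, 0 ≤ t → ∀ y : X,
      ⟪P' t y, y⟫ + 2 * ⟪P t (A t y), y⟫ = -‖y‖ ^ 2 := by
    intro t ht y
    have h := congrArg (fun T : X →L[ℝ] X => ⟪T y, y⟫) (hLyap t ht)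
    simp only [ContinuousLinearMap.add_apply, ContinuousLinearMap.coe_comp', Function.comp_apply,
      ContinuousLinearMap.neg_apply, ContinuousLinearMap.coe_id', id_eq, inner_add_left,
      inner_neg_left] at h
    rw [ContinuousLinearMap.adjoint_inner_left, real_inner_self_eq_norm_sq y] at h
    have h2 : ⟪P t y, A t y⟫ = ⟪P t (A t y), y⟫ := hsym t y (A t y)
    linarith
  -- derivative of V along solutions
  have hVderiv : ∀ (u : ℝ → U) (x : ℝ → X) (t : ℝ), 0 ≤ t →
      HasDerivAt x (A t (x t) + B t (u t)) t →
      HasDerivAt (fun s => ⟪P s (x s), x s⟫)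
        (-‖x t‖ ^ 2 + 2 * ⟪P t (B t (u t)), x t⟫) t := by
    intro u x t ht hx
    set x' : X := A t (x t) + B t (u t) with hx'def
    have h1 : HasDerivAt (fun s => P s (x s)) (P' t (x t) + P t x') t :=
      (hP t).clm_apply hx
    have h2 := h1.inner ℝ hx
    have hval : ⟪P t (x t), x'⟫ + ⟪P' t (x t) + P t x', x t⟫
        = -‖x t‖ ^ 2 + 2 * ⟪P t (B t (u t)), x t⟫ := by
      have e1 : ⟪P t (x t), x'⟫ = ⟪P t x', x t⟫ := hsym t (x t) x' ▸ rfl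
      have e2 : ⟪P t x', x t⟫
          = ⟪P t (A t (x t)), x t⟫ + ⟪P t (B t (u t)), x t⟫ := by
        rw [hx'def, map_add, inner_add_left]
      have e3 := hlyap' t ht (x t)
      rw [inner_add_left, e1, e2]
      linarith
    rw [← hval]
    exact h2
  -- pcNorm facts
  have hpcle : ∀ u : ℝ → U, IsPC u → ∀ s : ℝ, 0 ≤ s → ‖u s‖ ≤ pcNorm u := by
    intro u hu s hs
    obtain ⟨C, hC⟩ := hu.bounded
    exact le_csSup ⟨C, fun v ⟨w, _, hw⟩ => hw ▸ hC w⟩ ⟨s, hs, rfl⟩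
  have hpc0 : ∀ u : ℝ → U, IsPC u → 0 ≤ pcNorm u := fun u hu =>
    le_trans (norm_nonneg (u 0)) (hpcle u hu 0 le_rfl)
  -- the inner product bound
  have hinb : ∀ u : ℝ → U, IsPC u → ∀ (x : ℝ → X) (t : ℝ), 0 ≤ t →
      ⟪P t (B t (u t)), x t⟫ ≤ p * btilde * pcNorm u * ‖x t‖ := by
    intro u hu x t ht
    calc ⟪P t (B t (u t)), x t⟫ ≤ ‖P t (B t (u t))‖ * ‖x t‖ := real_inner_le_norm _ _
      _ ≤ p * btilde * pcNorm u * ‖x t‖ := by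
        apply mul_le_mul_of_nonneg_right _ (norm_nonneg _)
        calc ‖P t (B t (u t))‖ ≤ ‖P t‖ * ‖B t (u t)‖ := (P t).le_opNorm _
          _ ≤ ‖P t‖ * (‖B t‖ * ‖u t‖) :=
            mul_le_mul_of_nonneg_left ((B t).le_opNorm _) (norm_nonneg _)
          _ ≤ p * btilde * pcNorm u := by
            have h1 := hPle t ht
            have h2 := hBle t ht
            have h3 := hpcle u hu t ht
            have h4 := norm_nonneg (P t)
            have h5 := norm_nonneg (B t)
            have h6 := norm_nonneg (u t)
            calc ‖P t‖ * (‖B t‖ * ‖u t‖) ≤ p * (btilde * pcNorm u) :=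
                mul_le_mul h1 (mul_le_mul h2 h3 h6 hb0) (mul_nonneg h5 h6) hp0
              _ = p * btilde * pcNorm u := (mul_assoc _ _ _).symm
  refine ⟨fun t ht y => ⟨hcoer t ht y, hupper t ht y⟩, ?_, ?_⟩
  · -- dissipation inequality
    intro u hu t0 ht0 x hsol t ht η hη hx v' hv'
    have htpos : (0:ℝ) ≤ t := le_trans ht0 (le_of_lt ht)
    have hveq : v' = -‖x t‖ ^ 2 + 2 * ⟪P t (B t (u t)), x t⟫ :=
      hv'.unique (hVderiv u x t htpos hx)
    have hib := hinb u hu x t htpos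
    have hr0 := hpc0 u hu
    have key2 : 2 * (pcNorm u * ‖x t‖) ≤ η * ‖x t‖ ^ 2 + pcNorm u ^ 2 / η := by
      rw [← sub_nonneg]
      have heq : η * ‖x t‖ ^ 2 + pcNorm u ^ 2 / η - 2 * (pcNorm u * ‖x t‖)
          = (η * ‖x t‖ - pcNorm u) ^ 2 / η := by
        field_simp; ring
      rw [heq]; positivity
    have key3 : 2 * ⟪P t (B t (u t)), x t⟫
        ≤ p * btilde * η * ‖x t‖ ^ 2 + p * btilde / η * pcNorm u ^ 2 := by
      have h := mul_le_mul_of_nonneg_left key2 hpb0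
      have hexp : p * btilde * (η * ‖x t‖ ^ 2 + pcNorm u ^ 2 / η)
          = p * btilde * η * ‖x t‖ ^ 2 + p * btilde / η * pcNorm u ^ 2 := by
        field_simp
      calc 2 * ⟪P t (B t (u t)), x t⟫ ≤ 2 * (p * btilde * pcNorm u * ‖x t‖) := by linarith
        _ = p * btilde * (2 * (pcNorm u * ‖x t‖)) := by ring
        _ ≤ p * btilde * (η * ‖x t‖ ^ 2 + pcNorm u ^ 2 / η) := h
        _ = p * btilde * η * ‖x t‖ ^ 2 + p * btilde / η * pcNorm u ^ 2 := hexp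
    rw [hveq]
    linarith
  · -- ISS estimate
    set q : ℝ := max p μ₁ with hq
    have hqpos : 0 < q := lt_of_lt_of_le hμ₁ (le_max_right _ _)
    set lam : ℝ := 1 / (2 * q) with hlam
    have hlampos : 0 < lam := by positivity
    set c : ℝ := 2 * (p * btilde) ^ 2 with hcdef
    have hc0 : 0 ≤ c := by positivity
    set C₁ : ℝ := Real.sqrt (q / μ₁) with hC₁
    have hC₁pos : 0 < C₁ := Real.sqrt_pos.2 (by positivity)
    set C₂ : ℝ := Real.sqrt (2 * q * c / μ₁) + 1 with hC₂
    have hC₂pos : 0 < C₂ := by positivity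
    refine ⟨fun r t => C₁ * Real.exp (-((lam / 2) * t)) * r, fun r => C₂ * r, ?_, ?_, ?_⟩
    · constructor
      · intro t _
        exact classK_linear (by positivity)
      · intro r _
        exact (Continuous.mul (continuous_const.mul
          ((continuous_const.mul continuous_id).neg.rexp)) continuous_const).continuousOn
      · intro r hr s _ t _ hst
        have hexp : Real.exp (-((lam / 2) * t)) < Real.exp (-((lam / 2) * s)) := by
          apply Real.exp_lt_exp.2
          have h := mul_lt_mul_of_pos_left hst (show (0:ℝ) < lam / 2 by positivity)
          linarith
        have h1 : C₁ * Real.exp (-((lam / 2) * t)) < C₁ * Real.exp (-((lam / 2) * s)) :=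
          (mul_lt_mul_iff_right₀ hC₁pos).2 hexp
        exact (mul_lt_mul_iff_left₀ hr).2 h1
      · intro r hr
        have h1 : Tendsto (fun t : ℝ => (lam / 2) * t) atTop atTop :=
          Tendsto.const_mul_atTop (by positivity) tendsto_id
        have h2 : Tendsto (fun t : ℝ => Real.exp (-((lam / 2) * t))) atTop (𝓝 0) :=
          Real.tendsto_exp_neg_atTop_nhds_zero.comp h1
        simpa using (h2.const_mul C₁).mul_const r
    · exact classK_linear hC₂pos
    · intro u hu t0 ht0 x hsol t htt0
      obtain ⟨hxc, D, hDfin, hxd⟩ := hsol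
      set r : ℝ := pcNorm u with hrdef
      have hr0 : 0 ≤ r := hpc0 u hu
      set V : ℝ → ℝ := fun s => ⟪P s (x s), x s⟫ with hV
      have hPc : Continuous P := continuous_iff_continuousAt.2 fun s => (hP s).continuousAt
      have hVcont : ContinuousOn V (Set.Icc t0 t) := by
        have hxc' : ContinuousOn x (Set.Icc t0 t) := hxc.mono Set.Icc_subset_Ici_self
        exact ContinuousOn.inner ((hPc.continuousOn).clm_apply hxc') hxc'
      have hgron := gronwall_finite_exceptions (K := -lam) (ε := c * r ^ 2) (δ := V t0)
        (a := t0) (b := t) hDfin hVcont ?_ le_rfl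
      · have hVt := hgron t ⟨htt0, le_rfl⟩
        -- bound the gronwall bound
        have hKne : (-lam) ≠ 0 := neg_ne_zero.2 (ne_of_gt hlampos)
        have hΔ : 0 ≤ t - t0 := by linarith
        have hexple : Real.exp (-lam * (t - t0)) ≤ 1 :=
          Real.exp_le_one_iff.2 (by nlinarith [mul_nonneg hlampos.le hΔ])
        have hexppos : 0 < Real.exp (-lam * (t - t0)) := Real.exp_pos _
        have hVt0nn : 0 ≤ V t0 := le_trans (by positivity) (hcoer t0 ht0 (x t0))
        have hgb : gronwallBound (V t0) (-lam) (c * r ^ 2) (t - t0)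
            ≤ V t0 * Real.exp (-lam * (t - t0)) + 2 * q * (c * r ^ 2) := by
          simp only [gronwallBound_of_K_ne_0 hKne]
          have h1 : c * r ^ 2 / (-lam) * (Real.exp (-lam * (t - t0)) - 1)
              = 2 * q * (c * r ^ 2) * (1 - Real.exp (-lam * (t - t0))) := by
            rw [hlam]; field_simp; ring
          rw [h1]
          have h9 : 0 ≤ 2 * q * (c * r ^ 2) * Real.exp (-lam * (t - t0)) := by positivity
          linarith
        have hVub : V t ≤ q * ‖x t0‖ ^ 2 * Real.exp (-lam * (t - t0)) + 2 * q * c * r ^ 2 := by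
          have h2 : V t0 ≤ q * ‖x t0‖ ^ 2 := le_trans (hupper t0 ht0 (x t0))
            (mul_le_mul_of_nonneg_right (le_max_left p μ₁) (sq_nonneg _))
          have h3 : V t0 * Real.exp (-lam * (t - t0)) ≤
              q * ‖x t0‖ ^ 2 * Real.exp (-lam * (t - t0)) :=
            mul_le_mul_of_nonneg_right h2 hexppos.le
          linarith
        have hlow : μ₁ * ‖x t‖ ^ 2 ≤ V t := hcoer t (le_trans ht0 htt0) (x t)
        -- extract the norm bound
        have hx2 : ‖x t‖ ^ 2 ≤ (q / μ₁) * ‖x t0‖ ^ 2 * Real.exp (-lam * (t - t0))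
            + 2 * q * c / μ₁ * r ^ 2 := by
          rw [div_mul_eq_mul_div, div_mul_eq_mul_div, div_mul_eq_mul_div, ← add_div,
            le_div_iff₀ hμ₁]
          linarith
        have ha1 : (q / μ₁) * ‖x t0‖ ^ 2 * Real.exp (-lam * (t - t0))
            = (C₁ * Real.exp (-((lam / 2) * (t - t0))) * ‖x t0‖) ^ 2 := by
          have hsq : C₁ ^ 2 = q / μ₁ := Real.sq_sqrt (by positivity)
          have hexp2 : Real.exp (-((lam / 2) * (t - t0))) ^ 2 = Real.exp (-lam * (t - t0)) := by
            rw [sq, ← Real.exp_add]; congr 1; ring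
          rw [eq_comm, mul_pow, mul_pow, hsq, hexp2]; ring
        have ha2 : 2 * q * c / μ₁ * r ^ 2 = (Real.sqrt (2 * q * c / μ₁) * r) ^ 2 := by
          rw [eq_comm, mul_pow, Real.sq_sqrt (show (0:ℝ) ≤ 2 * q * c / μ₁ by positivity)]
        have hnorm : ‖x t‖ ≤ C₁ * Real.exp (-((lam / 2) * (t - t0))) * ‖x t0‖
            + Real.sqrt (2 * q * c / μ₁) * r := by
          have h4 : ‖x t‖ = Real.sqrt (‖x t‖ ^ 2) := (Real.sqrt_sq (norm_nonneg _)).symm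
          rw [h4]
          calc Real.sqrt (‖x t‖ ^ 2)
              ≤ Real.sqrt ((q / μ₁) * ‖x t0‖ ^ 2 * Real.exp (-lam * (t - t0))
                + 2 * q * c / μ₁ * r ^ 2) := Real.sqrt_le_sqrt hx2
            _ ≤ Real.sqrt ((q / μ₁) * ‖x t0‖ ^ 2 * Real.exp (-lam * (t - t0)))
                + Real.sqrt (2 * q * c / μ₁ * r ^ 2) :=
                sqrt_add_le _ _ (by positivity) (by positivity)
            _ = C₁ * Real.exp (-((lam / 2) * (t - t0))) * ‖x t0‖
                + Real.sqrt (2 * q * c / μ₁) * r := by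
                rw [ha1, ha2, Real.sqrt_sq (by positivity), Real.sqrt_sq (by positivity)]
        calc ‖x t‖ ≤ C₁ * Real.exp (-((lam / 2) * (t - t0))) * ‖x t0‖
              + Real.sqrt (2 * q * c / μ₁) * r := hnorm
          _ ≤ C₁ * Real.exp (-((lam / 2) * (t - t0))) * ‖x t0‖ + C₂ * r := by
              have h10 : Real.sqrt (2 * q * c / μ₁) ≤ C₂ := by rw [hC₂]; linarith
              have h11 := mul_le_mul_of_nonneg_right h10 hr0
              linarith
      · -- derivative bound hypothesis for Grönwall
        intro s hs hsD
        have hs0 : (0:ℝ) ≤ s := le_trans ht0 hs.1.le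
        have hx's := hxd s ⟨hs.1, hsD⟩
        refine ⟨-‖x s‖ ^ 2 + 2 * ⟪P s (B s (u s)), x s⟫, hVderiv u x s hs0 hx's, ?_⟩
        have hib := hinb u hu x s hs0
        have hup : V s ≤ q * ‖x s‖ ^ 2 := le_trans (hupper s hs0 (x s))
          (mul_le_mul_of_nonneg_right (le_max_left p μ₁) (sq_nonneg _))
        have hamgm : 2 * (p * btilde * r * ‖x s‖) ≤ (1/2) * ‖x s‖ ^ 2 + c * r ^ 2 := by
          rw [hcdef]
          nlinarith [sq_nonneg (‖x s‖ - 2 * (p * btilde * r))]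
        have hVq : -lam * V s + c * r ^ 2 ≥ -(1/2) * ‖x s‖ ^ 2 + c * r ^ 2 := by
          have h5 : lam * V s ≤ lam * (q * ‖x s‖ ^ 2) :=
            mul_le_mul_of_nonneg_left hup hlampos.le
          have h6 : lam * (q * ‖x s‖ ^ 2) = (1/2) * ‖x s‖ ^ 2 := by
            rw [← mul_assoc, show lam * q = 1 / 2 by rw [hlam]; field_simp]
          linarith
        linarith
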